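/- Let G be a simple graph on a vertex type V and let v₁, v₂ ∈ V with G.Adj v₁ v₂. Define the simple graph G′ on Option V by: some u and some v are adjacent in G′ iff u and v are adjacent in G and {u,v} ≠ {v₁,v₂}, and none is adjacent to some u iff u = v₁ or u = v₂. Then the minimum length of a cycle in G′ passing through the vertex none equals (the minimum length of a cycle in G containing the edge {v₁,v₂}) + 1, where both minima are infima in ℕ∞ (taking value ∞ if no such cycle exists), 'minimum length of a cycle in H passing through a vertex w' means the infimum in ℕ∞ of the set of lengths of cycles of H that visit w, 'minimum length of a cycle in G containing the edge e' means the infimum in ℕ∞ of the set of lengths of cycles of G whose edge set contains e, and ∞ + 1 = ∞. -/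

import Mathlib

/-- The minimum length of a cycle of `G` whose edge set contains `e`,
as an infimum in `ℕ∞` (so `⊤` if no such cycle exists). -/
noncomputable def minCycleLengthThroughEdge {V : Type*} (G : SimpleGraph V)
    (e : Sym2 V) : ℕ∞ :=
  ⨅ (a : V) (w : G.Walk a a) (_ : w.IsCycle ∧ e ∈ w.edges), (w.length : ℕ∞)

/-- The minimum length of a cycle of `G` whose support contains the vertex
`v`, as an infimum in `ℕ∞` (so `⊤` if no such cycle exists). -/
noncomputable def minCycleLengthThroughVertex {V : Type*} (G : SimpleGraph V)
    (v : V) : ℕ∞ :=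
  ⨅ (a : V) (w : G.Walk a a) (_ : w.IsCycle ∧ v ∈ w.support), (w.length : ℕ∞)

/-- `G` with the edge `{v₁, v₂}` subdivided: the edge is deleted and a new
vertex (`none`) is joined to `v₁` and `v₂`. -/
def subdivideEdge {V : Type*} (G : SimpleGraph V) (v₁ v₂ : V) :
    SimpleGraph (Option V) :=
  SimpleGraph.fromRel (fun a b =>
    match a, b with
    | some u, some v => G.Adj u v ∧ s(u, v) ≠ s(v₁, v₂)
    | none, some u => u = v₁ ∨ u = v₂
    | _, _ => False)

namespace Stmt15Aux

open SimpleGraph Walk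

variable {V : Type*} {G : SimpleGraph V} {v₁ v₂ : V}

lemma adj_some_some {u v : V} :
    (subdivideEdge G v₁ v₂).Adj (some u) (some v) ↔
      G.Adj u v ∧ s(u, v) ≠ s(v₁, v₂) := by
  rw [subdivideEdge, SimpleGraph.fromRel_adj]
  constructor
  · rintro ⟨hne, h1 | h2⟩
    · exact h1
    · exact ⟨h2.1.symm, by rw [Sym2.eq_swap]; exact h2.2⟩
  · intro hh
    exact ⟨by simpa using hh.1.ne, Or.inl hh⟩

lemma adj_none_some {u : V} :
    (subdivideEdge G v₁ v₂).Adj none (some u) ↔ (u = v₁ ∨ u = v₂) := by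
  rw [subdivideEdge, SimpleGraph.fromRel_adj]
  simp

lemma adj_none {x : Option V} (hx : (subdivideEdge G v₁ v₂).Adj none x) :
    ∃ u : V, x = some u ∧ (u = v₁ ∨ u = v₂) := by
  cases x with
  | none => exact absurd hx (subdivideEdge G v₁ v₂).irrefl
  | some u => exact ⟨u, rfl, adj_none_some.mp hx⟩

/-- The homomorphism from `G` minus the edge `{v₁,v₂}` into the subdivision. -/
def liftHom (G : SimpleGraph V) (v₁ v₂ : V) :
    G.deleteEdges {s(v₁, v₂)} →g subdivideEdge G v₁ v₂ where
  toFun := some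
  map_rel' := by
    intro a b hab
    rw [SimpleGraph.deleteEdges_adj] at hab
    exact adj_some_some.mpr ⟨hab.1, by simpa using hab.2⟩

lemma length_rotate {W : Type*} [DecidableEq W] {H : SimpleGraph W} {u v : W}
    (c : H.Walk v v) (h : u ∈ c.support) : (c.rotate u h).length = c.length := by
  simp only [Walk.rotate]
  rw [Walk.length_append, add_comm, ← Walk.length_append, Walk.take_spec]

/-- Lift a walk of `G` avoiding the edge `{v₁,v₂}` to the subdivision. -/
lemma exists_lift {a b : V} (p : G.Walk a b) (hp : s(v₁, v₂) ∉ p.edges) :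
    ∃ L : (subdivideEdge G v₁ v₂).Walk (some a) (some b),
      L.length = p.length ∧ L.support = p.support.map some ∧
        L.edges = p.edges.map (Sym2.map some) := by
  have hp' : ∀ e ∈ p.edges, e ∉ ({s(v₁, v₂)} : Set (Sym2 V)) := by
    intro e he
    simp only [Set.mem_singleton_iff]
    rintro rfl; exact hp he
  refine ⟨(p.toDeleteEdges {s(v₁, v₂)} hp').map (liftHom G v₁ v₂), ?_, ?_, ?_⟩
  · exact (Walk.length_map _ _).trans (Walk.length_transfer _ _)
  · exact (Walk.support_map _ _).trans (by rw [Walk.support_transfer]; rfl)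
  · exact (Walk.edges_map _ _).trans (by rw [Walk.edges_transfer]; rfl)

/-- Project a walk of the subdivision avoiding `none` down to `G`. -/
lemma proj_walk : ∀ {x y : Option V}
    (r : (subdivideEdge G v₁ v₂).Walk x y), (none ∉ r.support) →
    ∀ {a b : V}, x = some a → y = some b →
    ∃ p : G.Walk a b, p.length = r.length ∧ p.support.map some = r.support ∧
      s(v₁, v₂) ∉ p.edges := by
  intro x y r
  induction r with
  | nil =>
    rintro - a b rfl hab
    obtain rfl : a = b := by injection hab
    exact ⟨Walk.nil, by simp⟩
  | @cons x z y h' r' ih =>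
    rintro hn a b rfl rfl
    simp only [Walk.support_cons, List.mem_cons, not_or] at hn
    obtain ⟨c, rfl⟩ : ∃ c, z = some c := by
      cases z with
      | none => exact absurd r'.start_mem_support hn.2
      | some c => exact ⟨c, rfl⟩
    obtain ⟨hadj, hne⟩ := adj_some_some.mp h'
    obtain ⟨p, hl, hs, he⟩ := ih hn.2 rfl rfl
    refine ⟨Walk.cons hadj p, by simp [hl], by simp [hs], ?_⟩
    simp only [Walk.edges_cons, List.mem_cons, not_or]
    exact ⟨fun hh => hne hh.symm, he⟩

/-- From a cycle of the subdivision through `none`, get a cycle of `G`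
through the edge `{v₁,v₂}`, one shorter. -/
lemma cycle_of_cycle' (h : G.Adj v₁ v₂) {a : Option V}
    (w : (subdivideEdge G v₁ v₂).Walk a a) (hw : w.IsCycle)
    (hn : none ∈ w.support) :
    ∃ (b : V) (c : G.Walk b b), (c.IsCycle ∧ s(v₁, v₂) ∈ c.edges) ∧
      w.length = c.length + 1 := by
  suffices H : ∀ (w₀ : (subdivideEdge G v₁ v₂).Walk none none), w₀.IsCycle →
      ∃ (b : V) (c : G.Walk b b), (c.IsCycle ∧ s(v₁, v₂) ∈ c.edges) ∧
        w₀.length = c.length + 1 by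
    classical
    obtain ⟨b, c, hc, hlen⟩ := H (w.rotate none hn) (hw.rotate hn)
    exact ⟨b, c, hc, by rwa [length_rotate] at hlen⟩
  intro w₀ hw₀
  cases w₀ with
  | nil => exact absurd hw₀ Walk.IsCycle.not_of_nil
  | @cons _ x _ h₁ q =>
    obtain ⟨u, rfl, hu⟩ := adj_none h₁
    -- decompose q from the end
    obtain ⟨y, h₂, r, rfl⟩ : ∃ (y : Option V)
        (h₂ : (subdivideEdge G v₁ v₂).Adj none y)
        (r : (subdivideEdge G v₁ v₂).Walk y (some u)),
        q = (Walk.cons h₂ r).reverse := by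
      cases hh : q.reverse with
      | cons h₂ r => exact ⟨_, h₂, r, by rw [← hh, q.reverse_reverse]⟩
    obtain ⟨u', rfl, hu'⟩ := adj_none h₂
    rw [Walk.reverse_cons] at hw₀ ⊢
    set s : (subdivideEdge G v₁ v₂).Walk (some u) (some u') := r.reverse with hs
    rw [Walk.isCycle_def] at hw₀
    obtain ⟨htrail, -, hnodup⟩ := hw₀
    rw [Walk.support_cons, List.tail_cons, Walk.support_append,
      Walk.support_cons, Walk.support_nil, List.tail_cons,
      List.nodup_append] at hnodup
    have hsnodup : s.support.Nodup := hnodup.1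
    have hnone : none ∉ s.support := by
      intro hmem
      exact hnodup.2.2 _ hmem _ (by simp) rfl
    rw [Walk.isTrail_def, Walk.edges_cons, Walk.edges_append,
      Walk.edges_cons, Walk.edges_nil, List.nodup_cons,
      List.mem_append] at htrail
    have hxy : u ≠ u' := by
      rintro rfl
      refine htrail.1 (Or.inr ?_)
      rw [Sym2.eq_swap]
      exact List.mem_singleton_self _
    obtain ⟨p, hl, hsup, hedge⟩ := proj_walk s hnone rfl rfl
    have hpnodup : p.support.Nodup := by
      have := hsup ▸ hsnodup
      exact this.of_map some
    have hlen : (Walk.cons h₁ (s.append (Walk.cons h₂.symm Walk.nil))).length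
        = p.length + 2 := by
      simp only [Walk.length_cons, Walk.length_append, Walk.length_nil, hl]
    have build : ∀ {x y : V} (hadj : G.Adj x y) (q : G.Walk x y),
        q.support.Nodup → s(x, y) ∉ q.edges →
        ∃ (b : V) (c : G.Walk b b), c.IsCycle ∧ s(x, y) ∈ c.edges ∧
          c.length = q.length + 1 := by
      intro x y hadj q hqnd hqe
      refine ⟨y, Walk.cons hadj.symm q, ?_, ?_, by simp⟩
      · rw [Walk.cons_isCycle_iff]
        refine ⟨(Walk.isPath_def q).mpr hqnd, ?_⟩
        rw [Sym2.eq_swap]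
        exact hqe
      · rw [Walk.edges_cons, Sym2.eq_swap]
        exact List.mem_cons_self
    have hcases : (u = v₁ ∧ u' = v₂) ∨ (u = v₂ ∧ u' = v₁) := by
      rcases hu with h1 | h1 <;> rcases hu' with h2 | h2
      · exact absurd (h1.trans h2.symm) hxy
      · exact Or.inl ⟨h1, h2⟩
      · exact Or.inr ⟨h1, h2⟩
      · exact absurd (h1.trans h2.symm) hxy
    rcases hcases with ⟨rfl, rfl⟩ | ⟨rfl, rfl⟩
    · obtain ⟨b, c, hc1, hc2, hc3⟩ := build h p hpnodup hedge
      exact ⟨b, c, ⟨hc1, hc2⟩, by omega⟩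
    · obtain ⟨b, c, hc1, hc2, hc3⟩ := build h.symm p hpnodup
        (by rw [Sym2.eq_swap]; exact hedge)
      rw [Sym2.eq_swap] at hc2
      exact ⟨b, c, ⟨hc1, hc2⟩, by omega⟩

/-- In a path, an edge containing the first vertex must be the first edge. -/
lemma path_first_edge {a b x : V} (p : G.Walk a b) (hp : p.IsPath)
    (hx : s(a, x) ∈ p.edges) :
    ∃ (h' : G.Adj a x) (q : G.Walk x b), p = Walk.cons h' q := by
  cases p with
  | nil => simp at hx
  | @cons _ z _ h'' q =>
    rw [Walk.edges_cons, List.mem_cons] at hx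
    rw [Walk.cons_isPath_iff] at hp
    rcases hx with hx | hx
    · obtain rfl : x = z := by
        rw [Sym2.eq_iff] at hx
        rcases hx with ⟨-, rfl⟩ | ⟨haz, -⟩
        · rfl
        · exact absurd haz h''.ne
      exact ⟨h'', q, rfl⟩
    · exact absurd (q.fst_mem_support_of_mem_edges hx) hp.2

/-- From a cycle of `G` through the edge `{v₁,v₂}`, extract a path from `v₂`
to `v₁` avoiding that edge, one shorter. -/
lemma exists_path_of_cycle (h : G.Adj v₁ v₂) {a : V} (w : G.Walk a a)
    (hw : w.IsCycle) (he : s(v₁, v₂) ∈ w.edges) :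
    ∃ t : G.Walk v₂ v₁, t.support.Nodup ∧ s(v₁, v₂) ∉ t.edges ∧
      w.length = t.length + 1 := by
  classical
  have hv₁ : v₁ ∈ w.support := w.fst_mem_support_of_mem_edges he
  have hrot : (w.rotate v₁ hv₁).IsCycle := hw.rotate hv₁
  have herot : s(v₁, v₂) ∈ (w.rotate v₁ hv₁).edges :=
    (w.rotate_edges v₁ hv₁).mem_iff.mpr he
  have hlrot : (w.rotate v₁ hv₁).length = w.length := length_rotate w hv₁
  revert hrot herot hlrot
  generalize w.rotate v₁ hv₁ = w₁
  intro hrot herot hlrot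
  cases w₁ with
  | nil => exact absurd hrot Walk.IsCycle.not_of_nil
  | @cons _ c _ h' p =>
    rw [Walk.cons_isCycle_iff] at hrot
    obtain ⟨hpath, hfirst⟩ := hrot
    rw [Walk.edges_cons, List.mem_cons] at herot
    rw [Walk.length_cons] at hlrot
    rcases herot with heq | hmem
    · obtain rfl : c = v₂ := by
        rw [Sym2.eq_iff] at heq
        rcases heq with ⟨-, rfl⟩ | ⟨-, h21⟩
        · rfl
        · exact absurd h21 h.ne'
      exact ⟨p, (Walk.isPath_def p).mp hpath, hfirst, by omega⟩
    · -- the edge is the last edge of p; flip things around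
      have hrev : s(v₁, v₂) ∈ p.reverse.edges := by
        rwa [Walk.edges_reverse, List.mem_reverse]
      obtain ⟨h₂, q, hq⟩ := path_first_edge p.reverse hpath.reverse hrev
      -- q : G.Walk v₂ c, p.reverse = cons h₂ q
      have hqpath : (Walk.cons h₂ q).IsPath := hq ▸ hpath.reverse
      rw [Walk.cons_isPath_iff] at hqpath
      refine ⟨(Walk.cons h' q.reverse).reverse, ?_, ?_, ?_⟩
      · rw [Walk.support_reverse, List.nodup_reverse, Walk.support_cons]
        rw [List.nodup_cons, Walk.support_reverse, List.mem_reverse,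
          List.nodup_reverse]
        exact ⟨hqpath.2, (Walk.isPath_def q).mp hqpath.1⟩
      · rw [Walk.edges_reverse, List.mem_reverse, Walk.edges_cons,
          List.mem_cons, not_or]
        constructor
        · intro heq2
          exact hfirst (heq2 ▸ hmem)
        · rw [Walk.edges_reverse, List.mem_reverse]
          intro hmem2
          have hnd : (Walk.cons h₂ q).edges.Nodup := by
            rw [← hq]
            exact hpath.reverse.isTrail.edges_nodup
          rw [Walk.edges_cons, List.nodup_cons] at hnd
          exact hnd.1 hmem2
      · have : p.length = q.length + 1 := by
          have := congrArg Walk.length hq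
          rw [Walk.length_reverse, Walk.length_cons] at this
          omega
        rw [Walk.length_reverse, Walk.length_cons, Walk.length_reverse]
        omega

/-- From a path of `G` from `v₂` to `v₁` avoiding the edge `{v₁,v₂}`,
build a cycle of the subdivision through `none`, two longer. -/
lemma cycle'_of_path (h : G.Adj v₁ v₂) (t : G.Walk v₂ v₁)
    (hnd : t.support.Nodup) (hte : s(v₁, v₂) ∉ t.edges) :
    ∃ c : (subdivideEdge G v₁ v₂).Walk none none,
      (c.IsCycle ∧ none ∈ c.support) ∧ c.length = t.length + 2 := by
  obtain ⟨L, hLl, hLs, hLe⟩ := exists_lift t hte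
  have hA : (subdivideEdge G v₁ v₂).Adj none (some v₂) :=
    adj_none_some.mpr (Or.inr rfl)
  have hB : (subdivideEdge G v₁ v₂).Adj (some v₁) none :=
    (adj_none_some.mpr (Or.inl rfl)).symm
  refine ⟨Walk.cons hA (L.concat hB), ⟨?_, by simp⟩, ?_⟩
  · rw [Walk.isCycle_def]
    have hnoneL : (none : Option V) ∉ L.support := by
      rw [hLs]
      simp
    have hnoneLe : ∀ e ∈ L.edges, (none : Option V) ∉ e := by
      intro e he hne
      rw [hLe] at he
      obtain ⟨e', -, rfl⟩ := List.mem_map.mp he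
      obtain ⟨z, -, hz⟩ := Sym2.mem_map.mp hne
      exact Option.some_ne_none z hz
    refine ⟨?_, by simp, ?_⟩
    · rw [Walk.isTrail_def, Walk.edges_cons, Walk.edges_concat,
        List.concat_eq_append, List.nodup_cons, List.nodup_append]
      refine ⟨?_, ?_, by simp, ?_⟩
      · rw [List.mem_append]
        rintro (hmem | hmem)
        · exact hnoneLe _ hmem (by simp)
        · rw [List.mem_singleton, Sym2.eq_iff] at hmem
          rcases hmem with ⟨h1, -⟩ | ⟨-, h2⟩
          · exact absurd h1 (by simp)
          · exact h.ne' (Option.some_injective V h2)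
      · rw [hLe]
        refine List.Nodup.map ?_ ?_
        · exact Sym2.map.injective (Option.some_injective V)
        · exact ((Walk.isPath_def t).mpr hnd).isTrail.edges_nodup
      · intro e hmem b hb
        rw [List.mem_singleton] at hb
        subst hb
        rintro rfl
        exact hnoneLe _ hmem (by simp)
    · rw [Walk.support_cons, List.tail_cons, Walk.support_concat,
        List.nodup_append]
      refine ⟨?_, by simp, ?_⟩
      · rw [hLs]
        exact hnd.map (Option.some_injective V)
      · intro z hz b hb
        rw [List.mem_singleton] at hb
        subst hb
        rintro rfl
        exact hnoneL hz
  · rw [Walk.length_cons, Walk.length_concat, hLl]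

/-- An auxiliary rewriting of the two `⨅` definitions as `sInf` of sets. -/
lemma iInf_eq_sInf {W : Type*} (H : SimpleGraph W)
    (P : ∀ a : W, H.Walk a a → Prop) :
    (⨅ (a : W) (w : H.Walk a a) (_ : P a w), (w.length : ℕ∞)) =
      sInf {x : ℕ∞ | ∃ (a : W) (w : H.Walk a a), P a w ∧ x = w.length} := by
  apply le_antisymm
  · apply le_sInf
    rintro x ⟨a, w, hw, rfl⟩
    exact iInf₂_le_of_le a w (iInf_le _ hw)
  · exact le_iInf fun a => le_iInf fun w => le_iInf fun hw =>
      sInf_le ⟨a, w, hw, rfl⟩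

lemma sInf_add_one (T : Set ℕ∞) :
    sInf ((fun x => x + 1) '' T) = sInf T + 1 := by
  rcases T.eq_empty_or_nonempty with rfl | hT
  · simp
  · have hm := csInf_mem hT
    apply le_antisymm
    · exact sInf_le ⟨_, hm, rfl⟩
    · apply le_sInf
      rintro x ⟨y, hy, rfl⟩
      exact add_le_add_left (sInf_le hy) 1

end Stmt15Aux

theorem stmt_15 {V : Type*} (G : SimpleGraph V) (v₁ v₂ : V)
    (h : G.Adj v₁ v₂) :
    minCycleLengthThroughVertex (subdivideEdge G v₁ v₂) none
      = minCycleLengthThroughEdge G s(v₁, v₂) + 1 := by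
  open Stmt15Aux SimpleGraph in
  rw [minCycleLengthThroughVertex, minCycleLengthThroughEdge,
    iInf_eq_sInf (subdivideEdge G v₁ v₂) (fun a w => w.IsCycle ∧ none ∈ w.support),
    iInf_eq_sInf G (fun a w => w.IsCycle ∧ s(v₁, v₂) ∈ w.edges)]
  rw [show {x : ℕ∞ | ∃ (a : Option V) (w : (subdivideEdge G v₁ v₂).Walk a a),
        (w.IsCycle ∧ none ∈ w.support) ∧ x = w.length} =
      (fun x => x + 1) ''
        {x : ℕ∞ | ∃ (a : V) (w : G.Walk a a),
          (w.IsCycle ∧ s(v₁, v₂) ∈ w.edges) ∧ x = w.length} from ?_,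
    sInf_add_one]
  ext x
  constructor
  · rintro ⟨a, w, ⟨hc, hn⟩, rfl⟩
    obtain ⟨b, c, hcyc, hlen⟩ := cycle_of_cycle' h w hc hn
    refine ⟨(c.length : ℕ∞), ⟨b, c, hcyc, rfl⟩, ?_⟩
    rw [hlen]
    push_cast
    ring
  · rintro ⟨y, ⟨b, c, ⟨hc, he⟩, rfl⟩, rfl⟩
    obtain ⟨t, hnd, hte, hlen⟩ := exists_path_of_cycle h c hc he
    obtain ⟨c', hc', hlen'⟩ := cycle'_of_path h t hnd hte
    refine ⟨none, c', hc', ?_⟩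
    rw [hlen', hlen]
    push_cast
    ring
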